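/- (Theorem 3.5) For every n ≥ 0, s_n = ∑_{k=0}^{n} (−1)^{n−k} · s_{n,k} · m_k (an identity of integers), where s_{n,k} = ∑_{j=0}^{n−k} C(k+j,k)·C(j,n−j−k). -/

import Mathlib

/-- Value of a Motzkin step: `0` is up (+1), `1` is horizontal (0), `2` is down (-1). -/
def mval : Fin 3 → ℤ := ![1, 0, -1]

/-- Partial sum of the first `i` steps of the word `w`. -/
def mpsum {n : ℕ} (w : Fin n → Fin 3) (i : ℕ) : ℤ :=
  ∑ j : Fin n, if (j : ℕ) < i then mval (w j) else 0

/-- `m n`: number of symmetric Motzkin paths of length `2n`, encoded by their left half,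
a word in `{+1,0,-1}^n` with all partial sums nonnegative. -/
noncomputable def m (n : ℕ) : ℕ := Set.ncard {w : Fin n → Fin 3 | ∀ i ≤ n, 0 ≤ mpsum w i}

/-- Steps of a Schröder path: up `U`, down `D`, and the 2-horizontal step `H`. -/
inductive SStep | U | D | H
deriving DecidableEq

/-- Width of a Schröder step. -/
def SStep.width : SStep → ℕ
  | .U => 1 | .D => 1 | .H => 2

/-- Height increment of a Schröder step. -/
def SStep.height : SStep → ℤ
  | .U => 1 | .D => -1 | .H => 0

/-- `s n`: number of symmetric Schröder paths of length `2n`, encoded by their left half,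
a sequence of steps of total width `n` with all partial height sums nonnegative. -/
noncomputable def s (n : ℕ) : ℕ :=
  Set.ncard {l : List SStep | (l.map SStep.width).sum = n ∧
    ∀ i : ℕ, 0 ≤ ((l.take i).map SStep.height).sum}

/-- `s_{n,k} = ∑_{j=0}^{n-k} C(k+j,k) * C(j, n-j-k)` for `k ≤ n`, and `0` for `k > n`. -/
def snk (n k : ℕ) : ℕ :=
  if k ≤ n then
    ∑ j ∈ Finset.range (n - k + 1), Nat.choose (k + j) k * Nat.choose j (n - j - k)
  else 0

open Finset

instance : Fintype SStep := ⟨{SStep.U, SStep.D, SStep.H}, fun x => by cases x <;> simp⟩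

/-! ### Auxiliary arrays -/

def M2 : ℕ → ℤ → ℕ
  | 0, h => if h = 0 then 1 else 0
  | (n+1), h => if h < 0 then 0 else M2 n (h-1) + M2 n h + M2 n (h+1)

def S2 : ℕ → ℤ → ℕ
  | 0, h => if h = 0 then 1 else 0
  | 1, h => if h = 1 then 1 else 0
  | (n+2), h => if h < 0 then 0 else S2 (n+1) (h-1) + S2 (n+1) (h+1) + S2 n h

lemma M2_neg : ∀ {n : ℕ} {h : ℤ}, h < 0 → M2 n h = 0
  | 0, h, hh => by simp [M2]; omega
  | (n+1), h, hh => by simp [M2, hh]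

lemma S2_neg : ∀ {n : ℕ} {h : ℤ}, h < 0 → S2 n h = 0
  | 0, h, hh => by simp [S2]; omega
  | 1, h, hh => by simp [S2]; omega
  | (n+2), h, hh => by simp [S2, hh]

lemma M2_gt : ∀ {n : ℕ} {h : ℤ}, (n : ℤ) < h → M2 n h = 0
  | 0, h, hh => by simp [M2]; omega
  | (n+1), h, hh => by
      have h1 : M2 n (h-1) = 0 := M2_gt (by push_cast; omega)
      have h2 : M2 n h = 0 := M2_gt (by push_cast at hh ⊢; omega)
      have h3 : M2 n (h+1) = 0 := M2_gt (by push_cast at hh ⊢; omega)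
      simp [M2, h1, h2, h3]

/-! ### P and the snk recurrence -/

def P (d k : ℕ) : ℕ := ∑ j ∈ range (d+1), (k+j).choose k * (j.choose (d-j))

lemma P_zero (k : ℕ) : P 0 k = 1 := by simp [P]

lemma P_one (k : ℕ) : P 1 k = k + 1 := by
  simp [P, Finset.sum_range_succ, Nat.choose_succ_self_right]

lemma Qlemma (d : ℕ) (c : ℕ → ℕ) :
    ∑ j ∈ range (d+3), c j * (j.choose (d+2-j)) =
      ∑ i ∈ range (d+2), c (i+1) * (i.choose (d+1-i)) +
      ∑ i ∈ range (d+1), c (i+1) * (i.choose (d-i)) := by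
  rw [Finset.sum_range_succ' (fun j => c j * (j.choose (d+2-j)))]
  have h0 : c 0 * ((0:ℕ).choose (d+2-0)) = 0 := by simp
  rw [h0, add_zero]
  rw [Finset.sum_range_succ (fun i => c (i+1) * ((i+1).choose (d+2-(i+1))))]
  rw [Finset.sum_range_succ (fun i => c (i+1) * (i.choose (d+1-i)))]
  have hlast : c (d+1+1) * ((d+1+1).choose (d+2-(d+1+1))) = c (d+1+1) * ((d+1).choose (d+1-(d+1))) := by
    simp
  rw [hlast]
  have hmain : ∑ i ∈ range (d+1), c (i+1) * ((i+1).choose (d+2-(i+1))) =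
      ∑ i ∈ range (d+1), (c (i+1) * (i.choose (d+1-i)) + c (i+1) * (i.choose (d-i))) := by
    apply Finset.sum_congr rfl
    intro i hi
    rw [Finset.mem_range] at hi
    have h1 : d+2-(i+1) = (d-i)+1 := by omega
    have h2 : d+1-i = (d-i)+1 := by omega
    rw [h1, h2, Nat.choose_succ_succ, Nat.mul_add]
    ring
  rw [hmain, Finset.sum_add_distrib]
  ring

lemma P_rec (d k : ℕ) : P (d+2) (k+1) = P (d+1) (k+1) + P d (k+1) + P (d+2) k := by
  have hsplit : P (d+2) (k+1) = P (d+2) k + ∑ j ∈ range (d+3), (k+j).choose (k+1) * (j.choose (d+2-j)) := by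
    unfold P
    rw [← Finset.sum_add_distrib]
    apply Finset.sum_congr rfl
    intro j _
    have : k+1+j = (k+j)+1 := by omega
    rw [this, Nat.choose_succ_succ, Nat.add_mul]
  rw [hsplit, Qlemma d (fun j => (k+j).choose (k+1))]
  have e1 : ∑ i ∈ range (d+2), (k+(i+1)).choose (k+1) * (i.choose (d+1-i)) = P (d+1) (k+1) := by
    unfold P
    apply Finset.sum_congr rfl
    intro i _
    congr 2
    omega
  have e2 : ∑ i ∈ range (d+1), (k+(i+1)).choose (k+1) * (i.choose (d-i)) = P d (k+1) := by
    unfold P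
    apply Finset.sum_congr rfl
    intro i _
    congr 2
    omega
  rw [e1, e2]
  ring

lemma P_rec0 (d : ℕ) : P (d+2) 0 = P (d+1) 0 + P d 0 := by
  have h : P (d+2) 0 = ∑ j ∈ range (d+3), (fun _ => 1) j * (j.choose (d+2-j)) := by
    unfold P
    apply Finset.sum_congr rfl
    intro j _
    simp
  rw [h, Qlemma d (fun _ => 1)]
  unfold P
  congr 1 <;> (apply Finset.sum_congr rfl; intro i _; simp)

lemma snk_eq_P {n k : ℕ} (h : k ≤ n) : snk n k = P (n-k) k := by
  unfold snk P
  rw [if_pos h]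
  apply Finset.sum_congr rfl
  intro j _
  congr 2
  omega

lemma snk_gt {n k : ℕ} (h : n < k) : snk n k = 0 := by
  unfold snk
  rw [if_neg (by omega)]

lemma snk_rec (n k : ℕ) : snk (n+2) (k+1) = snk (n+1) (k+1) + snk n (k+1) + snk (n+1) k := by
  rcases le_or_gt k n with hle | hlt
  · rcases eq_or_lt_of_le hle with heq | hltk
    · -- k = n
      subst heq
      rw [snk_eq_P (by omega), snk_eq_P (by omega), snk_gt (by omega), snk_eq_P (by omega)]
      have e1 : k+2-(k+1) = 1 := by omega
      have e2 : k+1-(k+1) = 0 := by omega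
      have e3 : k+1-k = 1 := by omega
      rw [e1, e2, e3, P_one, P_zero, P_one]
      omega
    · -- k+1 ≤ n
      obtain ⟨e, rfl⟩ : ∃ e, n = k+1+e := ⟨n - (k+1), by omega⟩
      rw [snk_eq_P (by omega), snk_eq_P (by omega), snk_eq_P (by omega), snk_eq_P (by omega)]
      have e1 : k+1+e+2-(k+1) = e+2 := by omega
      have e2 : k+1+e+1-(k+1) = e+1 := by omega
      have e3 : k+1+e-(k+1) = e := by omega
      have e4 : k+1+e+1-k = e+2 := by omega
      rw [e1, e2, e3, e4]
      exact P_rec e k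
  · rcases eq_or_lt_of_le (Nat.succ_le_of_lt hlt) with heq | hlt2
    · -- k = n+1
      have hk : k = n+1 := by omega
      subst hk
      rw [snk_eq_P (by omega), snk_gt (by omega), snk_gt (by omega), snk_eq_P (by omega)]
      have e1 : n+2-(n+1+1) = 0 := by omega
      have e2 : n+1-(n+1) = 0 := by omega
      rw [e1, e2, P_zero, P_zero]
    · -- k ≥ n+2
      rw [snk_gt (by omega), snk_gt (by omega), snk_gt (by omega), snk_gt (by omega)]

lemma snk_rec0 (n : ℕ) : snk (n+2) 0 = snk (n+1) 0 + snk n 0 := by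
  rw [snk_eq_P (by omega), snk_eq_P (by omega), snk_eq_P (by omega)]
  simpa using P_rec0 n

/-! ### The key identity at each height -/

lemma key : ∀ n : ℕ, ∀ h : ℤ, ((S2 n h : ℤ)) =
    ∑ k ∈ range (n+1), (-1:ℤ)^(n-k) * (snk n k : ℤ) * (M2 k h : ℤ) := by
  intro n
  induction n using Nat.twoStepInduction with
  | zero =>
    intro h
    have : snk 0 0 = 1 := by decide
    simp [S2, M2, this]
  | one =>
    intro h
    rw [Finset.sum_range_succ, Finset.sum_range_succ, Finset.sum_range_zero]
    have h10 : snk 1 0 = 1 := by decide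
    have h11 : snk 1 1 = 1 := by decide
    rw [h10, h11]
    by_cases hneg : h < 0
    · rw [S2_neg hneg, M2_neg hneg, M2_neg hneg]
      simp
    · push_neg at hneg
      show ((S2 1 h : ℤ)) = _
      simp only [S2, M2, if_neg (not_lt.mpr hneg)]
      split_ifs <;> push_cast <;> omega
  | more n ih1 ih2 =>
    intro h
    have hsign1 : ∀ k ∈ range (n+2), (-1:ℤ)^(n+2-k) = -(-1:ℤ)^(n+1-k) := by
      intro k hk
      rw [mem_range] at hk
      have e : n+2-k = (n+1-k)+1 := by omega
      rw [e, pow_succ]; ring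
    have hsign2 : ∀ k ∈ range (n+1), (-1:ℤ)^(n+2-k) = (-1:ℤ)^(n-k) := by
      intro k hk
      rw [mem_range] at hk
      have e : n+2-k = (n-k)+2 := by omega
      rw [e, pow_succ, pow_succ]; ring
    have hG1 : ∑ k ∈ range (n+3), (-1:ℤ)^(n+2-k) * (snk (n+1) k : ℤ) * (M2 k h : ℤ)
        = -(S2 (n+1) h : ℤ) := by
      rw [Finset.sum_range_succ, snk_gt (by omega)]
      simp only [Nat.cast_zero, mul_zero, zero_mul, add_zero]
      rw [ih2 h, ← Finset.sum_neg_distrib]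
      refine Finset.sum_congr rfl fun k hk => ?_
      rw [hsign1 k hk]; ring
    have hG2 : ∑ k ∈ range (n+3), (-1:ℤ)^(n+2-k) * (snk n k : ℤ) * (M2 k h : ℤ)
        = (S2 n h : ℤ) := by
      rw [Finset.sum_range_succ, Finset.sum_range_succ, snk_gt (by omega), snk_gt (by omega)]
      simp only [Nat.cast_zero, mul_zero, zero_mul, add_zero]
      rw [ih1 h]
      exact Finset.sum_congr rfl fun k hk => by rw [hsign2 k hk]
    by_cases hneg : h < 0
    · rw [S2_neg hneg]
      have hz : ∀ k ∈ range (n+2+1), (-1:ℤ)^(n+2-k) * (snk (n+2) k : ℤ) * (M2 k h : ℤ) = 0 := by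
        intro k _
        rw [M2_neg hneg]; simp
      rw [Finset.sum_congr rfl hz]
      simp
    · push_neg at hneg
      have hM : ∀ k : ℕ, (M2 (k+1) h : ℤ) = (M2 k (h-1) : ℤ) + (M2 k h : ℤ) + (M2 k (h+1) : ℤ) := by
        intro k
        rw [show M2 (k+1) h = M2 k (h-1) + M2 k h + M2 k (h+1) by
          rw [M2]; rw [if_neg (not_lt.mpr hneg)]]
        push_cast; ring
      rw [Finset.sum_range_succ' (fun k => (-1:ℤ)^(n+2-k) * (snk (n+2) k : ℤ) * (M2 k h : ℤ))]
      have hterm : ∀ k ∈ range (n+2),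
          (-1:ℤ)^(n+2-(k+1)) * (snk (n+2) (k+1) : ℤ) * (M2 (k+1) h : ℤ)
          = (-1:ℤ)^(n+1-k) * (snk (n+1) (k+1) : ℤ) * (M2 (k+1) h : ℤ)
            + (-1:ℤ)^(n+1-k) * (snk n (k+1) : ℤ) * (M2 (k+1) h : ℤ)
            + ((-1:ℤ)^(n+1-k) * (snk (n+1) k : ℤ) * (M2 k (h-1) : ℤ)
              + (-1:ℤ)^(n+1-k) * (snk (n+1) k : ℤ) * (M2 k h : ℤ)
              + (-1:ℤ)^(n+1-k) * (snk (n+1) k : ℤ) * (M2 k (h+1) : ℤ)) := by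
        intro k hk
        have e : n+2-(k+1) = n+1-k := by omega
        have hr : (snk (n+2) (k+1) : ℤ)
            = (snk (n+1) (k+1) : ℤ) + (snk n (k+1) : ℤ) + (snk (n+1) k : ℤ) := by
          rw [show snk (n+2) (k+1) = snk (n+1) (k+1) + snk n (k+1) + snk (n+1) k from snk_rec n k]
          push_cast; ring
        rw [e, hr, hM k]; ring
      rw [Finset.sum_congr rfl hterm]
      rw [Finset.sum_add_distrib, Finset.sum_add_distrib, Finset.sum_add_distrib, Finset.sum_add_distrib]
      have hB1 : ∑ k ∈ range (n+2), (-1:ℤ)^(n+1-k) * (snk (n+1) k : ℤ) * (M2 k (h-1) : ℤ)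
          = (S2 (n+1) (h-1) : ℤ) := (ih2 (h-1)).symm
      have hB2 : ∑ k ∈ range (n+2), (-1:ℤ)^(n+1-k) * (snk (n+1) k : ℤ) * (M2 k h : ℤ)
          = (S2 (n+1) h : ℤ) := (ih2 h).symm
      have hB3 : ∑ k ∈ range (n+2), (-1:ℤ)^(n+1-k) * (snk (n+1) k : ℤ) * (M2 k (h+1) : ℤ)
          = (S2 (n+1) (h+1) : ℤ) := (ih2 (h+1)).symm
      have hf0 : (-1:ℤ)^(n+2-0) * (snk (n+2) 0 : ℤ) * (M2 0 h : ℤ)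
          = (-1:ℤ)^(n+2) * (snk (n+1) 0 : ℤ) * (M2 0 h : ℤ)
            + (-1:ℤ)^(n+2) * (snk n 0 : ℤ) * (M2 0 h : ℤ) := by
        rw [show snk (n+2) 0 = snk (n+1) 0 + snk n 0 from snk_rec0 n]
        push_cast; ring
      have hA1 : ∑ k ∈ range (n+2), (-1:ℤ)^(n+1-k) * (snk (n+1) (k+1) : ℤ) * (M2 (k+1) h : ℤ)
            + (-1:ℤ)^(n+2) * (snk (n+1) 0 : ℤ) * (M2 0 h : ℤ) = -(S2 (n+1) h : ℤ) := by
        rw [← hG1, Finset.sum_range_succ' (fun k => (-1:ℤ)^(n+2-k) * (snk (n+1) k : ℤ) * (M2 k h : ℤ))]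
        congr 1
        refine Finset.sum_congr rfl fun k hk => ?_
        rw [show n+2-(k+1) = n+1-k by omega]
      have hA2 : ∑ k ∈ range (n+2), (-1:ℤ)^(n+1-k) * (snk n (k+1) : ℤ) * (M2 (k+1) h : ℤ)
            + (-1:ℤ)^(n+2) * (snk n 0 : ℤ) * (M2 0 h : ℤ) = (S2 n h : ℤ) := by
        rw [← hG2, Finset.sum_range_succ' (fun k => (-1:ℤ)^(n+2-k) * (snk n k : ℤ) * (M2 k h : ℤ))]
        congr 1
        refine Finset.sum_congr rfl fun k hk => ?_
        rw [show n+2-(k+1) = n+1-k by omega]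
      have hS : (S2 (n+2) h : ℤ)
          = (S2 (n+1) (h-1) : ℤ) + (S2 (n+1) (h+1) : ℤ) + (S2 n h : ℤ) := by
        rw [show S2 (n+2) h = S2 (n+1) (h-1) + S2 (n+1) (h+1) + S2 n h by
          rw [S2]; rw [if_neg (not_lt.mpr hneg)]]
        push_cast; ring
      rw [hf0, hB1, hB2, hB3, hS]
      linarith [hA1, hA2]

/-! ### Generic counting helpers -/

lemma nat_card_sigma {ι : Type*} [Fintype ι] (f : ι → Type*) [∀ a, Finite (f a)] :
    Nat.card (Σ a, f a) = ∑ a, Nat.card (f a) := by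
  classical
  letI : ∀ a, Fintype (f a) := fun a => Fintype.ofFinite _
  simp [Nat.card_eq_fintype_card, Fintype.card_sigma]

lemma ncard_fiberwise {α : Type*} {S : Set α} (hS : S.Finite) (f : α → ℕ) {N : ℕ}
    (hb : ∀ x ∈ S, f x < N) :
    S.ncard = ∑ h ∈ range N, {x ∈ S | f x = h}.ncard := by
  classical
  rw [Set.ncard_eq_toFinset_card _ hS,
    Finset.card_eq_sum_card_fiberwise (f := f) (t := range N)
      (fun x hx => mem_range.mpr (hb x (hS.mem_toFinset.mp hx)))]
  refine Finset.sum_congr rfl fun h _ => ?_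
  have : {x ∈ S | f x = h} = ↑(hS.toFinset.filter fun x => f x = h) := by
    ext x
    simp [Set.Finite.mem_toFinset]
  rw [this, Set.ncard_coe_finset]

/-! ### Motzkin counting -/

def Mset (n : ℕ) (h : ℤ) : Set (Fin n → Fin 3) :=
  {w | (∀ i ≤ n, 0 ≤ mpsum w i) ∧ mpsum w n = h}

noncomputable def Mc (n : ℕ) (h : ℤ) : ℕ := (Mset n h).ncard

lemma mval_le (a : Fin 3) : mval a ≤ 1 := by fin_cases a <;> simp [mval]

lemma mpsum_big {n : ℕ} (w : Fin n → Fin 3) {i : ℕ} (hi : n ≤ i) : mpsum w i = mpsum w n := by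
  unfold mpsum
  refine Finset.sum_congr rfl fun j _ => ?_
  have := j.isLt
  rw [if_pos (by omega), if_pos (by omega)]

lemma mpsum_le {n : ℕ} (w : Fin n → Fin 3) : mpsum w n ≤ n := by
  unfold mpsum
  calc ∑ j : Fin n, (if (j:ℕ) < n then mval (w j) else 0) ≤ ∑ _j : Fin n, (1:ℤ) := by
        apply Finset.sum_le_sum
        intro j _
        rw [if_pos j.isLt]
        exact mval_le _
    _ = n := by simp

lemma mpsum_snoc_le {n : ℕ} (w : Fin n → Fin 3) (a : Fin 3) {i : ℕ} (hi : i ≤ n) :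
    mpsum (Fin.snoc w a) i = mpsum w i := by
  unfold mpsum
  rw [Fin.sum_univ_castSucc]
  simp only [Fin.snoc_castSucc, Fin.snoc_last, Fin.coe_castSucc, Fin.val_last]
  rw [if_neg (by omega), add_zero]

lemma mpsum_snoc_top {n : ℕ} (w : Fin n → Fin 3) (a : Fin 3) :
    mpsum (Fin.snoc w a) (n+1) = mpsum w n + mval a := by
  unfold mpsum
  rw [Fin.sum_univ_castSucc]
  simp only [Fin.snoc_castSucc, Fin.snoc_last, Fin.coe_castSucc, Fin.val_last]
  rw [if_pos (by omega)]
  congr 1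
  refine Finset.sum_congr rfl fun j _ => ?_
  have := j.isLt
  rw [if_pos (by omega), if_pos (by omega)]

lemma Mc_zero (h : ℤ) : Mc 0 h = if h = 0 then 1 else 0 := by
  have hps : ∀ (w : Fin 0 → Fin 3) (i : ℕ), mpsum w i = 0 := by
    intro w i
    unfold mpsum
    simp
  rcases eq_or_ne h 0 with rfl | hne
  · rw [if_pos rfl]
    have : Mset 0 (0:ℤ) = Set.univ := by
      ext w
      simp [Mset, hps]
    unfold Mc
    rw [this, Set.ncard_univ, Nat.card_eq_fintype_card]
    simp
  · rw [if_neg hne]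
    have : Mset 0 h = ∅ := by
      ext w
      simp [Mset, hps]
      omega
    unfold Mc
    rw [this, Set.ncard_empty]

lemma Mc_neg {n : ℕ} {h : ℤ} (hh : h < 0) : Mc n h = 0 := by
  have : Mset n h = ∅ := by
    ext w
    simp only [Mset, Set.mem_setOf_eq, Set.mem_empty_iff_false, iff_false]
    rintro ⟨hv, he⟩
    have := hv n le_rfl
    omega
  unfold Mc
  rw [this, Set.ncard_empty]

lemma snoc_injective {n : ℕ} (a : Fin 3) :
    Function.Injective (fun w : Fin n → Fin 3 => Fin.snoc w a : (Fin n → Fin 3) → (Fin (n+1) → Fin 3)) := by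
  intro w v hwv
  have := congrArg Fin.init hwv
  simpa [Fin.init_snoc] using this

lemma mem_snoc_image {n : ℕ} (h : ℤ) (hh : 0 ≤ h) (a : Fin 3) (w' : Fin (n+1) → Fin 3)
    (ha : w' (Fin.last n) = a) (hw' : w' ∈ Mset (n+1) h) :
    w' ∈ (fun w : Fin n → Fin 3 => Fin.snoc w a) '' Mset n (h - mval a) := by
  refine ⟨Fin.init w', ⟨?_, ?_⟩, ?_⟩
  · intro i hi
    have : mpsum (Fin.init w') i = mpsum w' i := by
      conv_rhs => rw [← Fin.snoc_init_self w']
      rw [mpsum_snoc_le _ _ hi]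
    rw [this]
    exact hw'.1 i (le_trans hi (Nat.le_succ n))
  · have htop : mpsum w' (n+1) = mpsum (Fin.init w') n + mval (w' (Fin.last n)) := by
      conv_lhs => rw [← Fin.snoc_init_self w']
      rw [mpsum_snoc_top]
    have := hw'.2
    rw [ha] at htop
    omega
  · show Fin.snoc (Fin.init w') a = w'
    rw [← ha]
    exact Fin.snoc_init_self w'

lemma snoc_mem_Mset {n : ℕ} (h : ℤ) (hh : 0 ≤ h) (a : Fin 3) (w : Fin n → Fin 3)
    (hw : w ∈ Mset n (h - mval a)) : Fin.snoc w a ∈ Mset (n+1) h := by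
  refine ⟨?_, ?_⟩
  · intro i hi
    rcases le_or_gt i n with hle | hgt
    · rw [mpsum_snoc_le w a hle]
      exact hw.1 i hle
    · have : i = n+1 := by omega
      subst this
      rw [mpsum_snoc_top, hw.2]
      omega
  · rw [mpsum_snoc_top, hw.2]
    ring

lemma Mset_succ (n : ℕ) (h : ℤ) (hh : 0 ≤ h) :
    Mset (n+1) h = (fun w : Fin n → Fin 3 => Fin.snoc w (0:Fin 3)) '' Mset n (h - 1)
      ∪ (fun w : Fin n → Fin 3 => Fin.snoc w (1:Fin 3)) '' Mset n h
      ∪ (fun w : Fin n → Fin 3 => Fin.snoc w (2:Fin 3)) '' Mset n (h + 1) := by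
  have e0 : mval 0 = 1 := rfl
  have e1 : mval 1 = 0 := rfl
  have e2 : mval 2 = -1 := rfl
  ext w'
  constructor
  · intro hw'
    have hcase : w' (Fin.last n) = 0 ∨ w' (Fin.last n) = 1 ∨ w' (Fin.last n) = 2 := by
      have : ∀ a : Fin 3, a = 0 ∨ a = 1 ∨ a = 2 := by decide
      exact this _
    rcases hcase with ha | ha | ha
    · left; left
      have := mem_snoc_image h hh 0 w' ha hw'
      rwa [e0] at this
    · left; right
      have := mem_snoc_image h hh 1 w' ha hw'
      rwa [e1, sub_zero] at this
    · right
      have := mem_snoc_image h hh 2 w' ha hw'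
      rwa [e2, sub_neg_eq_add] at this
  · rintro ((⟨w, hw, rfl⟩ | ⟨w, hw, rfl⟩) | ⟨w, hw, rfl⟩)
    · exact snoc_mem_Mset h hh 0 w (by rwa [e0])
    · exact snoc_mem_Mset h hh 1 w (by rwa [e1, sub_zero])
    · exact snoc_mem_Mset h hh 2 w (by rwa [e2, sub_neg_eq_add])

lemma snoc_image_disj {n : ℕ} {a b : Fin 3} (hab : a ≠ b) (s t : Set (Fin n → Fin 3)) :
    Disjoint ((fun w : Fin n → Fin 3 => Fin.snoc w a : (Fin n → Fin 3) → (Fin (n+1) → Fin 3)) '' s)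
      ((fun w : Fin n → Fin 3 => Fin.snoc w b : (Fin n → Fin 3) → (Fin (n+1) → Fin 3)) '' t) := by
  rw [Set.disjoint_left]
  rintro x ⟨w, _, rfl⟩ ⟨v, _, hv⟩
  apply hab
  have := congrArg (fun f => f (Fin.last n)) hv
  simpa [Fin.snoc_last] using this.symm

lemma Mc_succ (n : ℕ) (h : ℤ) (hh : 0 ≤ h) :
    Mc (n+1) h = Mc n (h-1) + Mc n h + Mc n (h+1) := by
  unfold Mc
  rw [Mset_succ n h hh]
  rw [Set.ncard_union_eq (by
      apply Set.disjoint_union_left.mpr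
      exact ⟨snoc_image_disj (by decide) _ _, snoc_image_disj (by decide) _ _⟩)
    (Set.toFinite _) (Set.toFinite _)]
  rw [Set.ncard_union_eq (snoc_image_disj (by decide) _ _) (Set.toFinite _) (Set.toFinite _)]
  rw [Set.ncard_image_of_injective _ (snoc_injective 0),
    Set.ncard_image_of_injective _ (snoc_injective 1),
    Set.ncard_image_of_injective _ (snoc_injective 2)]

lemma Mc_eq_M2 : ∀ (n : ℕ) (h : ℤ), Mc n h = M2 n h := by
  intro n
  induction n with
  | zero =>
    intro h
    rw [Mc_zero]
    simp [M2]
  | succ n ih =>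
    intro h
    by_cases hneg : h < 0
    · rw [Mc_neg hneg, M2_neg hneg]
    · push_neg at hneg
      rw [Mc_succ n h hneg]
      rw [show M2 (n+1) h = M2 n (h-1) + M2 n h + M2 n (h+1) by
        rw [M2]; rw [if_neg (not_lt.mpr hneg)]]
      rw [ih, ih, ih]

lemma m_eq (n : ℕ) : m n = ∑ h ∈ range (n+1), M2 n (h : ℤ) := by
  unfold m
  have hfin : ({w : Fin n → Fin 3 | ∀ i ≤ n, 0 ≤ mpsum w i}).Finite := Set.toFinite _
  rw [ncard_fiberwise hfin (fun w => (mpsum w n).toNat)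
    (N := n+1) (fun w hw => by
      have h1 := mpsum_le w
      have h2 := hw n le_rfl
      show (mpsum w n).toNat < n+1
      omega)]
  refine Finset.sum_congr rfl fun h hk => ?_
  rw [← Mc_eq_M2]
  unfold Mc
  congr 1
  ext w
  simp only [Set.mem_sep_iff, Set.mem_setOf_eq, Mset]
  constructor
  · rintro ⟨hv, he⟩
    have h0 := hv n le_rfl
    have he' : (mpsum w n).toNat = h := he
    exact ⟨hv, by omega⟩
  · rintro ⟨hv, he⟩
    refine ⟨hv, ?_⟩
    show (mpsum w n).toNat = h
    omega

/-! ### Schröder counting -/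

def wsum (l : List SStep) : ℕ := (l.map SStep.width).sum
def hsum (l : List SStep) : ℤ := (l.map SStep.height).sum
def okl (l : List SStep) : Prop := ∀ i : ℕ, 0 ≤ hsum (l.take i)

def Sset (n : ℕ) (h : ℤ) : Set (List SStep) := {l | wsum l = n ∧ okl l ∧ hsum l = h}

noncomputable def Sc (n : ℕ) (h : ℤ) : ℕ := (Sset n h).ncard

lemma wsum_append (l l' : List SStep) : wsum (l ++ l') = wsum l + wsum l' := by simp [wsum]
lemma hsum_append (l l' : List SStep) : hsum (l ++ l') = hsum l + hsum l' := by simp [hsum]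
lemma hsum_single (a : SStep) : hsum [a] = a.height := by simp [hsum]
lemma wsum_single (a : SStep) : wsum [a] = a.width := by simp [wsum]

lemma width_pos (a : SStep) : 1 ≤ a.width := by cases a <;> simp [SStep.width]
lemma height_le_width (a : SStep) : a.height ≤ (a.width : ℤ) := by
  cases a <;> simp [SStep.height, SStep.width]

lemma length_le_wsum (l : List SStep) : l.length ≤ wsum l := by
  induction l with
  | nil => simp [wsum]
  | cons a t ih =>
    have h1 := width_pos a
    have h2 : wsum (a :: t) = a.width + wsum t := by simp [wsum]
    simp only [List.length_cons]
    omega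

lemma hsum_le_wsum (l : List SStep) : hsum l ≤ (wsum l : ℤ) := by
  induction l with
  | nil => simp [wsum, hsum]
  | cons a t ih =>
    have h1 := height_le_width a
    have h2 : wsum (a :: t) = a.width + wsum t := by simp [wsum]
    have h3 : hsum (a :: t) = a.height + hsum t := by simp [hsum]
    rw [h2, h3]
    push_cast
    omega

lemma wsum_eq_zero {l : List SStep} (h : wsum l = 0) : l = [] := by
  cases l with
  | nil => rfl
  | cons a t =>
    exfalso
    have h1 := width_pos a
    have h2 : wsum (a :: t) = a.width + wsum t := by simp [wsum]
    omega

lemma okl_nonneg {l : List SStep} (h : okl l) : 0 ≤ hsum l := by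
  have := h l.length
  rwa [List.take_length] at this

lemma okl_append_single {l : List SStep} {a : SStep} (hl : okl l) (h2 : 0 ≤ hsum l + a.height) :
    okl (l ++ [a]) := by
  intro i
  rcases le_or_gt i l.length with hle | hgt
  · rw [List.take_append_of_le_length hle]
    exact hl i
  · rw [List.take_of_length_le (by simp; omega)]
    rw [hsum_append, hsum_single]
    exact h2

lemma okl_of_append_single {l : List SStep} {a : SStep} (h : okl (l ++ [a])) : okl l := by
  intro i
  rcases le_or_gt i l.length with hle | hgt
  · have := h i
    rwa [List.take_append_of_le_length hle] at this
  · rw [List.take_of_length_le (le_of_lt hgt)]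
    have := h l.length
    rwa [List.take_append_of_le_length le_rfl, List.take_length] at this

lemma Sset_finite (n : ℕ) (h : ℤ) : (Sset n h).Finite := by
  apply (List.finite_length_le SStep n).subset
  intro l hl
  simp only [Set.mem_setOf_eq]
  exact le_trans (length_le_wsum l) (le_of_eq hl.1)

lemma Sc_zero (h : ℤ) : Sc 0 h = if h = 0 then 1 else 0 := by
  unfold Sc
  rcases eq_or_ne h 0 with rfl | hne
  · rw [if_pos rfl]
    have hset : Sset 0 0 = {[]} := by
      ext l
      simp only [Sset, Set.mem_setOf_eq, Set.mem_singleton_iff]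
      constructor
      · rintro ⟨h1, _, _⟩
        exact wsum_eq_zero h1
      · rintro rfl
        exact ⟨rfl, fun i => by simp [hsum], rfl⟩
    rw [hset, Set.ncard_singleton]
  · rw [if_neg hne]
    have hset : Sset 0 h = ∅ := by
      ext l
      simp only [Sset, Set.mem_setOf_eq, Set.mem_empty_iff_false, iff_false]
      rintro ⟨h1, _, h3⟩
      have := wsum_eq_zero h1
      subst this
      simp [hsum] at h3
      exact hne h3.symm
    rw [hset, Set.ncard_empty]

lemma wsum_one {l : List SStep} (h : wsum l = 1) : l = [SStep.U] ∨ l = [SStep.D] := by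
  cases l with
  | nil => exfalso; simp [wsum] at h
  | cons a t =>
    have h2 : wsum (a :: t) = a.width + wsum t := by simp [wsum]
    cases a with
    | U =>
      left
      have : wsum t = 0 := by simp [SStep.width] at h2; omega
      rw [wsum_eq_zero this]
    | D =>
      right
      have : wsum t = 0 := by simp [SStep.width] at h2; omega
      rw [wsum_eq_zero this]
    | H =>
      exfalso
      simp only [SStep.width] at h2
      omega

lemma Sc_one (h : ℤ) : Sc 1 h = if h = 1 then 1 else 0 := by
  unfold Sc
  have hU : hsum [SStep.U] = 1 := by simp [hsum, SStep.height]
  have hDneg : ¬ okl [SStep.D] := by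
    intro hok
    have := hok 1
    simp [hsum, SStep.height] at this
  rcases eq_or_ne h 1 with rfl | hne
  · rw [if_pos rfl]
    have hset : Sset 1 1 = {[SStep.U]} := by
      ext l
      simp only [Sset, Set.mem_setOf_eq, Set.mem_singleton_iff]
      constructor
      · rintro ⟨h1, h2, h3⟩
        rcases wsum_one h1 with rfl | rfl
        · rfl
        · exact absurd h2 hDneg
      · rintro rfl
        refine ⟨rfl, ?_, hU⟩
        intro i
        cases i with
        | zero => simp [hsum]
        | succ j =>
          rw [List.take_of_length_le (by simp)]
          rw [hU]
          omega
    rw [hset, Set.ncard_singleton]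
  · rw [if_neg hne]
    have hset : Sset 1 h = ∅ := by
      ext l
      simp only [Sset, Set.mem_setOf_eq, Set.mem_empty_iff_false, iff_false]
      rintro ⟨h1, h2, h3⟩
      rcases wsum_one h1 with rfl | rfl
      · rw [hU] at h3; exact hne h3.symm
      · exact hDneg h2
    rw [hset, Set.ncard_empty]

lemma Sc_neg {n : ℕ} {h : ℤ} (hh : h < 0) : Sc n h = 0 := by
  unfold Sc
  have hset : Sset n h = ∅ := by
    ext l
    simp only [Sset, Set.mem_setOf_eq, Set.mem_empty_iff_false, iff_false]
    rintro ⟨_, h2, h3⟩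
    have := okl_nonneg h2
    omega
  rw [hset, Set.ncard_empty]

lemma append_single_disj {a b : SStep} (hab : a ≠ b) (s t : Set (List SStep)) :
    Disjoint ((· ++ [a]) '' s) ((· ++ [b]) '' t) := by
  rw [Set.disjoint_left]
  rintro x ⟨l, _, rfl⟩ ⟨l', _, hv⟩
  apply hab
  have := congrArg List.reverse hv
  simp only [List.reverse_append, List.reverse_cons, List.reverse_nil, List.nil_append,
    List.singleton_append, List.cons.injEq] at this
  exact this.1.symm

lemma Sset_rec (n : ℕ) (h : ℤ) (hh : 0 ≤ h) :
    Sset (n+2) h = ((· ++ [SStep.U]) '' Sset (n+1) (h-1))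
      ∪ ((· ++ [SStep.D]) '' Sset (n+1) (h+1))
      ∪ ((· ++ [SStep.H]) '' Sset n h) := by
  ext l
  constructor
  · rintro ⟨h1, h2, h3⟩
    have hne : l ≠ [] := by
      intro hnil
      subst hnil
      simp [wsum] at h1
    obtain ⟨l', a, rfl⟩ : ∃ l' a, l = l' ++ [a] :=
      ⟨l.dropLast, l.getLast hne, (List.dropLast_append_getLast hne).symm⟩
    rw [wsum_append, wsum_single] at h1
    rw [hsum_append, hsum_single] at h3
    have hok' := okl_of_append_single h2
    cases a with
    | U =>
      left; left
      refine ⟨l', ⟨?_, hok', ?_⟩, rfl⟩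
      · simp only [SStep.width] at h1; omega
      · simp only [SStep.height] at h3; omega
    | D =>
      left; right
      refine ⟨l', ⟨?_, hok', ?_⟩, rfl⟩
      · simp only [SStep.width] at h1; omega
      · simp only [SStep.height] at h3; omega
    | H =>
      right
      refine ⟨l', ⟨?_, hok', ?_⟩, rfl⟩
      · simp only [SStep.width] at h1; omega
      · simp only [SStep.height] at h3; omega
  · rintro ((⟨l', ⟨h1, h2, h3⟩, rfl⟩ | ⟨l', ⟨h1, h2, h3⟩, rfl⟩) | ⟨l', ⟨h1, h2, h3⟩, rfl⟩)
    · refine ⟨?_, ?_, ?_⟩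
      · rw [wsum_append, wsum_single]; simp only [SStep.width]; omega
      · exact okl_append_single h2 (by rw [h3]; simp only [SStep.height]; omega)
      · rw [hsum_append, hsum_single, h3]; simp only [SStep.height]; ring
    · refine ⟨?_, ?_, ?_⟩
      · rw [wsum_append, wsum_single]; simp only [SStep.width]; omega
      · exact okl_append_single h2 (by rw [h3]; simp only [SStep.height]; omega)
      · rw [hsum_append, hsum_single, h3]; simp only [SStep.height]; ring
    · refine ⟨?_, ?_, ?_⟩
      · rw [wsum_append, wsum_single]; simp only [SStep.width]; omega
      · exact okl_append_single h2 (by rw [h3]; simp only [SStep.height]; omega)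
      · rw [hsum_append, hsum_single, h3]; simp only [SStep.height]; ring

lemma Sc_rec (n : ℕ) (h : ℤ) (hh : 0 ≤ h) :
    Sc (n+2) h = Sc (n+1) (h-1) + Sc (n+1) (h+1) + Sc n h := by
  unfold Sc
  rw [Sset_rec n h hh]
  rw [Set.ncard_union_eq (by
      apply Set.disjoint_union_left.mpr
      exact ⟨append_single_disj (by simp) _ _, append_single_disj (by simp) _ _⟩)
    (((Sset_finite _ _).image _).union ((Sset_finite _ _).image _)) ((Sset_finite _ _).image _)]
  rw [Set.ncard_union_eq (append_single_disj (by simp) _ _)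
    ((Sset_finite _ _).image _) ((Sset_finite _ _).image _)]
  rw [Set.ncard_image_of_injective _ (List.append_left_injective [SStep.U]),
    Set.ncard_image_of_injective _ (List.append_left_injective [SStep.D]),
    Set.ncard_image_of_injective _ (List.append_left_injective [SStep.H])]

lemma Sc_eq_S2 : ∀ (n : ℕ) (h : ℤ), Sc n h = S2 n h := by
  intro n
  induction n using Nat.twoStepInduction with
  | zero => intro h; rw [Sc_zero]; simp [S2]
  | one => intro h; rw [Sc_one]; simp [S2]
  | more n ih1 ih2 =>
    intro h
    by_cases hneg : h < 0
    · rw [Sc_neg hneg, S2_neg hneg]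
    · push_neg at hneg
      rw [Sc_rec n h hneg]
      rw [show S2 (n+2) h = S2 (n+1) (h-1) + S2 (n+1) (h+1) + S2 n h by
        rw [S2]; rw [if_neg (not_lt.mpr hneg)]]
      rw [ih2, ih2, ih1]

lemma s_eq (n : ℕ) : s n = ∑ h ∈ range (n+1), S2 n (h : ℤ) := by
  unfold s
  have hEq : {l : List SStep | (l.map SStep.width).sum = n ∧
      ∀ i : ℕ, 0 ≤ ((l.take i).map SStep.height).sum} = {l : List SStep | wsum l = n ∧ okl l} := rfl
  rw [hEq]
  have hfin : ({l : List SStep | wsum l = n ∧ okl l}).Finite := by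
    apply (List.finite_length_le SStep n).subset
    intro l hl
    simp only [Set.mem_setOf_eq]
    exact le_trans (length_le_wsum l) (le_of_eq hl.1)
  rw [ncard_fiberwise hfin (fun l => (hsum l).toNat)
    (N := n+1) (fun l hl => by
      have h1 := hsum_le_wsum l
      have h2 := okl_nonneg hl.2
      rw [hl.1] at h1
      show (hsum l).toNat < n+1
      omega)]
  refine Finset.sum_congr rfl fun h hk => ?_
  rw [← Sc_eq_S2]
  unfold Sc
  congr 1
  ext l
  simp only [Set.mem_sep_iff, Set.mem_setOf_eq, Sset]
  constructor
  · rintro ⟨⟨h1, h2⟩, he⟩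
    have h0 := okl_nonneg h2
    have he' : (hsum l).toNat = h := he
    exact ⟨h1, h2, by omega⟩
  · rintro ⟨h1, h2, h3⟩
    refine ⟨⟨h1, h2⟩, ?_⟩
    show (hsum l).toNat = h
    omega

/-- **Theorem 3.5.** `s_n = ∑_{k=0}^n (-1)^{n-k} s_{n,k} m_k`. -/
theorem schroeder_eq_alternating_sum_motzkin (n : ℕ) :
    (s n : ℤ) = ∑ k ∈ Finset.range (n + 1),
      (-1 : ℤ) ^ (n - k) * snk n k * m k := by
  have h1 : (s n : ℤ) = ∑ h ∈ range (n+1), ((S2 n (h:ℤ) : ℕ) : ℤ) := by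
    rw [s_eq n]
    push_cast
    rfl
  rw [h1]
  have h2 : ∀ h ∈ range (n+1), ((S2 n (h:ℤ) : ℕ) : ℤ)
      = ∑ k ∈ range (n+1), (-1:ℤ)^(n-k) * (snk n k : ℤ) * (M2 k (h:ℤ) : ℤ) :=
    fun h _ => key n (h:ℤ)
  rw [Finset.sum_congr rfl h2, Finset.sum_comm]
  refine Finset.sum_congr rfl fun k hk => ?_
  rw [mem_range] at hk
  rw [← Finset.mul_sum]
  have hnat : ∑ h ∈ range (n+1), M2 k (h:ℤ) = m k := by
    rw [m_eq k]
    exact (Finset.sum_subset (Finset.range_subset_range.mpr (by omega))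
      (fun h _ hns => M2_gt (by
        simp only [Finset.mem_range, not_lt] at hns
        exact_mod_cast hns))).symm
  have h3 : ∑ h ∈ range (n+1), ((M2 k (h:ℤ) : ℕ) : ℤ) = ((m k : ℕ) : ℤ) := by
    rw [← hnat]
    push_cast
    rfl
  rw [h3]
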